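/- Let Gt = (V, E, {f_v}) be a general threshold instance on an arbitrary finite directed graph. If f_v is AD-∞ for every node v ∈ V (Gt is locally AD-∞), then the spread function σ is AD-∞ (Gt is globally AD-∞). -/

import Mathlib

open MeasureTheory Finset
open scoped Classical

noncomputable section


/-- The difference of a set function `f` over a set `A`, evaluated at `S`:
`Δ_A f(S) = ∑_{B ⊆ A} (-1)^{|B|} f(S ∪ (A \ B))`. -/
def adDiff {V : Type*} [DecidableEq V] (f : Finset V → ℝ) (A S : Finset V) : ℝ :=
  ∑ B ∈ A.powerset, (-1 : ℝ) ^ B.card * f (S ∪ (A \ B))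

/-- A set function `f : 2^V → ℝ` is AD-`k` if `(-1)^{|A|+1} Δ_A f(S) ≥ 0` for every
nonempty `A` with `|A| ≤ k` and every `S`. -/
def IsADk {V : Type*} [DecidableEq V] (f : Finset V → ℝ) (k : ℕ) : Prop :=
  ∀ A S : Finset V, A.Nonempty → A.card ≤ k →
    0 ≤ (-1 : ℝ) ^ (A.card + 1) * adDiff f A S



/-- A general threshold instance on a finite directed graph `(V, E)`:
each node `v` has a threshold function `f v : 2^V → [0,1]` that is monotone,
vanishes on `∅`, and depends only on the in-neighbors of `v`. -/
structure GTInstance (V : Type*) [Fintype V] [DecidableEq V] where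
  E : V → V → Prop
  f : V → Finset V → ℝ
  f_nonneg : ∀ v S, 0 ≤ f v S
  f_le_one : ∀ v S, f v S ≤ 1
  f_mono : ∀ v, Monotone (f v)
  f_empty : ∀ v, f v ∅ = 0
  f_local : ∀ v S, f v S = f v (S.filter fun u => E u v)

variable {V : Type*} [Fintype V] [DecidableEq V]

/-- The deterministic cascade for threshold vector `θ` and seed set `S`:
`C_0 = S`, `C_{t+1} = C_t ∪ {v : f_v(C_t) ≥ θ_v}`. -/
def cascade (gt : GTInstance V) (θ : V → ℝ) (S : Finset V) : ℕ → Finset V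
  | 0 => S
  | t + 1 =>
      cascade gt θ S t ∪ Finset.univ.filter fun v => θ v ≤ gt.f v (cascade gt θ S t)

/-- The final active set of the cascade. -/
def finalSet (gt : GTInstance V) (θ : V → ℝ) (S : Finset V) : Finset V :=
  cascade gt θ S (Fintype.card V)

/-- The uniform (Lebesgue product) probability measure on `[0,1]^V`. -/
def cubeMeasure (V : Type*) [Fintype V] : Measure (V → ℝ) :=
  Measure.pi fun _ => volume.restrict (Set.Icc 0 1)

/-- `activationProb gt v S` is the probability (over uniform thresholds) that `v`
is active at the end of the diffusion started from seed set `S`. -/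
def activationProb (gt : GTInstance V) (v : V) (S : Finset V) : ℝ :=
  (cubeMeasure V {θ | v ∈ finalSet gt θ S}).toReal

/-- The spread function `σ(S) = ∑_{v ∈ V} P_v(S)`. -/
def spread (gt : GTInstance V) (S : Finset V) : ℝ :=
  ∑ v : V, activationProb gt v S

/-- The underlying graph is a layered graph with `m ≥ 2` layers (layer indices `1, …, m`),
all edges going from a node of layer `i+1` to a node of layer `i`. -/
def IsLayered (gt : GTInstance V) (m : ℕ) (layer : V → ℕ) : Prop :=
  2 ≤ m ∧ (∀ v, 1 ≤ layer v ∧ layer v ≤ m) ∧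
    ∀ u v, gt.E u v → layer u = layer v + 1

/-- The underlying graph is a directed acyclic graph (no directed cycles). -/
def IsDAG (gt : GTInstance V) : Prop := ∀ v, ¬ Relation.TransGen gt.E v v


namespace ADWork
set_option linter.unusedSectionVars false
set_option maxHeartbeats 1000000

lemma SB1 (A : Finset V) : ∑ B ∈ A.powerset, (-1 : ℝ) ^ B.card = if A = ∅ then 1 else 0 := by
  have := @Finset.sum_powerset_neg_one_pow_card V _ A
  have h2 : ((∑ m ∈ A.powerset, (-1 : ℤ) ^ m.card : ℤ) : ℝ)
      = ∑ B ∈ A.powerset, (-1 : ℝ) ^ B.card := by push_cast; rfl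
  rw [← h2, this]; split <;> simp

lemma SB2 {D A : Finset V} (hDA : D ⊆ A) :
    ∑ B ∈ A.powerset.filter (fun B => D ⊆ B), (-1 : ℝ) ^ B.card
      = if D = A then (-1 : ℝ) ^ A.card else 0 := by
  have key : ∑ B ∈ A.powerset.filter (fun B => D ⊆ B), (-1 : ℝ) ^ B.card
      = ∑ B' ∈ (A \ D).powerset, (-1 : ℝ) ^ (D.card + B'.card) := by
    refine Finset.sum_nbij' (fun B => B \ D) (fun B' => D ∪ B') ?_ ?_ ?_ ?_ ?_
    · intro B hB
      simp only [Finset.mem_filter, Finset.mem_powerset] at hB ⊢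
      exact Finset.sdiff_subset_sdiff hB.1 (Finset.Subset.refl _)
    · intro B' hB'
      simp only [Finset.mem_powerset] at hB'
      simp only [Finset.mem_filter, Finset.mem_powerset]
      exact ⟨Finset.union_subset hDA (hB'.trans Finset.sdiff_subset), Finset.subset_union_left⟩
    · intro B hB
      simp only [Finset.mem_filter, Finset.mem_powerset] at hB
      exact Finset.union_sdiff_of_subset hB.2
    · intro B' hB'
      simp only [Finset.mem_powerset] at hB'
      have hd : Disjoint D B' := Finset.disjoint_left.2 fun x hxD hxB' =>
        (Finset.mem_sdiff.1 (hB' hxB')).2 hxD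
      exact Finset.union_sdiff_cancel_left hd
    · intro B hB
      simp only [Finset.mem_filter, Finset.mem_powerset] at hB
      rw [Finset.card_sdiff_of_subset hB.2, ← Nat.add_sub_assoc (Finset.card_le_card hB.2)]
      congr 1
      omega
  rw [key]
  have : ∑ B' ∈ (A \ D).powerset, (-1:ℝ) ^ (D.card + B'.card)
      = (-1:ℝ)^D.card * ∑ B' ∈ (A \ D).powerset, (-1:ℝ) ^ B'.card := by
    rw [Finset.mul_sum]; exact Finset.sum_congr rfl (by intros; rw [pow_add])
  rw [this, SB1]
  by_cases h : D = A
  · subst h; simp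
  · have : A \ D ≠ ∅ := by
      intro hc
      exact h (Finset.Subset.antisymm hDA (fun x hx => by
        by_contra hxd; exact absurd (Finset.mem_sdiff.2 ⟨hx, hxd⟩) (by simp [hc])))
    simp [this, h]

lemma compl_union_sdiff {A B : Finset V} (hBA : B ⊆ A) : Aᶜ ∪ (A \ B) = Bᶜ := by
  ext x
  simp only [Finset.mem_union, Finset.mem_compl, Finset.mem_sdiff]
  by_cases hxB : x ∈ B
  · simp [hxB, hBA hxB]
  · by_cases hxA : x ∈ A <;> simp [hxB, hxA]

lemma coeff_sum (C B : Finset V) :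
    ∑ A ∈ (univ : Finset (Finset V)).filter (fun A => (A ∩ C).Nonempty ∧ B ⊆ A),
        (-1 : ℝ) ^ (A.card + 1)
      = (if B = Cᶜ then (-1:ℝ)^B.card else 0) - (if B = univ then (-1:ℝ)^B.card else 0) := by
  have split : (univ : Finset (Finset V)).filter (fun A => B ⊆ A)
      = (univ : Finset (Finset V)).filter (fun A => (A ∩ C).Nonempty ∧ B ⊆ A)
        ∪ (univ : Finset (Finset V)).filter (fun A => A ∩ C = ∅ ∧ B ⊆ A) := by
    ext A
    simp only [Finset.mem_filter, Finset.mem_union, Finset.mem_univ, true_and]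
    rcases eq_or_ne (A ∩ C) ∅ with h | h
    · have h2 : ¬(A ∩ C).Nonempty := by simp [h]
      tauto
    · have h2 : (A ∩ C).Nonempty := Finset.nonempty_of_ne_empty h
      tauto
  have hdisj : Disjoint
      ((univ : Finset (Finset V)).filter (fun A => (A ∩ C).Nonempty ∧ B ⊆ A))
      ((univ : Finset (Finset V)).filter (fun A => A ∩ C = ∅ ∧ B ⊆ A)) := by
    rw [Finset.disjoint_left]
    intro A h1 h2
    simp only [Finset.mem_filter] at h1 h2
    rw [h2.2.1] at h1
    exact Finset.not_nonempty_empty h1.2.1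
  have hall : ∑ A ∈ (univ : Finset (Finset V)).filter (fun A => B ⊆ A),
      (-1 : ℝ) ^ (A.card + 1) = -(if B = univ then (-1:ℝ)^B.card else 0) := by
    have : ∑ A ∈ (univ : Finset (Finset V)).filter (fun A => B ⊆ A),
        (-1 : ℝ) ^ (A.card + 1)
        = -∑ A ∈ ((univ : Finset V).powerset).filter (fun A => B ⊆ A), (-1 : ℝ) ^ A.card := by
      rw [Finset.powerset_univ, ← Finset.sum_neg_distrib]
      exact Finset.sum_congr rfl fun A _ => by ring
    rw [this, SB2 (Finset.subset_univ B)]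
    split_ifs with h
    · subst h; rfl
    · simp
  have hemp : ∑ A ∈ (univ : Finset (Finset V)).filter (fun A => A ∩ C = ∅ ∧ B ⊆ A),
      (-1 : ℝ) ^ (A.card + 1) = -(if B = Cᶜ then (-1:ℝ)^B.card else 0) := by
    by_cases hBC : B ⊆ Cᶜ
    · have hset : (univ : Finset (Finset V)).filter (fun A => A ∩ C = ∅ ∧ B ⊆ A)
          = (Cᶜ.powerset).filter (fun A => B ⊆ A) := by
        ext A
        simp only [Finset.mem_filter, Finset.mem_univ, true_and, Finset.mem_powerset]
        constructor
        · rintro ⟨h1, h2⟩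
          refine ⟨fun x hx => Finset.mem_compl.2 fun hxC => ?_, h2⟩
          have : x ∈ A ∩ C := Finset.mem_inter.2 ⟨hx, hxC⟩
          simp [h1] at this
        · rintro ⟨h1, h2⟩
          refine ⟨Finset.eq_empty_of_forall_notMem fun x hx => ?_, h2⟩
          rcases Finset.mem_inter.1 hx with ⟨hxA, hxC⟩
          exact Finset.mem_compl.1 (h1 hxA) hxC
      rw [hset]
      have : ∑ A ∈ (Cᶜ.powerset).filter (fun A => B ⊆ A), (-1 : ℝ) ^ (A.card + 1)
          = -∑ A ∈ (Cᶜ.powerset).filter (fun A => B ⊆ A), (-1 : ℝ) ^ A.card := by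
        rw [← Finset.sum_neg_distrib]
        exact Finset.sum_congr rfl fun A _ => by ring
      rw [this, SB2 hBC]
      split_ifs with h
      · subst h; rfl
      · simp
    · have hset : (univ : Finset (Finset V)).filter (fun A => A ∩ C = ∅ ∧ B ⊆ A) = ∅ := by
        rw [Finset.filter_eq_empty_iff]
        intro A _
        rintro ⟨h1, h2⟩
        apply hBC
        intro x hx
        refine Finset.mem_compl.2 fun hxC => ?_
        have : x ∈ A ∩ C := Finset.mem_inter.2 ⟨h2 hx, hxC⟩
        simp [h1] at this
      have hne : B ≠ Cᶜ := fun h => hBC (h ▸ Finset.Subset.refl _)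
      rw [hset]
      simp [hne]
  have := Finset.sum_union hdisj (f := fun A : Finset V => (-1 : ℝ) ^ (A.card + 1))
  rw [← split] at this
  rw [hall, hemp] at this
  linarith

lemma coverage_identity (f : Finset V → ℝ) (hf0 : f ∅ = 0) (C : Finset V) :
    ∑ A ∈ (univ : Finset (Finset V)).filter (fun A => (A ∩ C).Nonempty),
      ((-1 : ℝ) ^ (A.card + 1) * adDiff f A Aᶜ) = f C := by
  have step1 : ∀ A : Finset V,
      (-1 : ℝ) ^ (A.card + 1) * adDiff f A Aᶜ
        = ∑ B ∈ A.powerset, (-1 : ℝ) ^ (A.card + 1) * ((-1 : ℝ) ^ B.card * f Bᶜ) := by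
    intro A
    rw [adDiff, Finset.mul_sum]
    refine Finset.sum_congr rfl fun B hB => ?_
    rw [compl_union_sdiff (Finset.mem_powerset.1 hB)]
  calc ∑ A ∈ (univ : Finset (Finset V)).filter (fun A => (A ∩ C).Nonempty),
        ((-1 : ℝ) ^ (A.card + 1) * adDiff f A Aᶜ)
      = ∑ A ∈ (univ : Finset (Finset V)).filter (fun A => (A ∩ C).Nonempty),
          ∑ B ∈ A.powerset, (-1 : ℝ) ^ (A.card + 1) * ((-1 : ℝ) ^ B.card * f Bᶜ) :=
        Finset.sum_congr rfl fun A _ => step1 A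
    _ = ∑ B ∈ (univ : Finset (Finset V)),
          ∑ A ∈ (univ : Finset (Finset V)).filter
              (fun A => (A ∩ C).Nonempty ∧ B ⊆ A),
            (-1 : ℝ) ^ (A.card + 1) * ((-1 : ℝ) ^ B.card * f Bᶜ) := by
        refine Finset.sum_comm' ?_
        intro A B
        simp only [Finset.mem_filter, Finset.mem_univ, Finset.mem_powerset, true_and]
        tauto
    _ = ∑ B ∈ (univ : Finset (Finset V)),
          ((if B = Cᶜ then (-1:ℝ)^B.card else 0) - (if B = univ then (-1:ℝ)^B.card else 0))
            * ((-1 : ℝ) ^ B.card * f Bᶜ) := by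
        refine Finset.sum_congr rfl fun B _ => ?_
        rw [← Finset.sum_mul, coeff_sum]
    _ = f C := by
        have expand : ∀ B : Finset V,
            ((if B = Cᶜ then (-1:ℝ)^B.card else 0) - (if B = univ then (-1:ℝ)^B.card else 0))
              * ((-1 : ℝ) ^ B.card * f Bᶜ)
            = (if B = Cᶜ then f Bᶜ else 0) - (if B = univ then f Bᶜ else 0) := by
          intro B
          have hsq : (-1:ℝ)^B.card * ((-1:ℝ)^B.card * f Bᶜ) = f Bᶜ := by
            rw [← mul_assoc, ← pow_add, show B.card + B.card = 2*B.card from by ring, pow_mul]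
            simp
          split_ifs with h1 h2 <;> simp [sub_mul, hsq]
        rw [Finset.sum_congr rfl fun B _ => expand B, Finset.sum_sub_distrib]
        rw [Finset.sum_ite_eq' univ (Cᶜ) (fun B => f Bᶜ),
            Finset.sum_ite_eq' univ (univ : Finset V) (fun B => f Bᶜ)]
        simp [hf0, compl_compl]

lemma indicator_AD (R A S : Finset V) (hA : A.Nonempty) :
    0 ≤ (-1:ℝ)^(A.card+1) * adDiff (fun T => if (T ∩ R).Nonempty then (1:ℝ) else 0) A S := by
  by_cases hS : (S ∩ R).Nonempty
  · have heq : adDiff (fun T => if (T ∩ R).Nonempty then (1:ℝ) else 0) A S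
        = ∑ B ∈ A.powerset, (-1:ℝ)^B.card := by
      refine Finset.sum_congr rfl fun B _ => ?_
      have h1 : ((S ∪ (A \ B)) ∩ R).Nonempty :=
        hS.mono (Finset.inter_subset_inter Finset.subset_union_left (le_refl _))
      simp [h1]
    rw [adDiff] at heq ⊢
    rw [heq, SB1]
    simp [Finset.nonempty_iff_ne_empty.1 hA]
  · have hSR : S ∩ R = ∅ := Finset.not_nonempty_iff_eq_empty.1 hS
    have key : ∀ B : Finset V, (((S ∪ (A \ B)) ∩ R).Nonempty ↔ ¬ (A ∩ R ⊆ B)) := by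
      intro B
      have h1 : (S ∪ (A \ B)) ∩ R = (A \ B) ∩ R := by
        rw [Finset.union_inter_distrib_right, hSR, Finset.empty_union]
      rw [h1]
      constructor
      · rintro ⟨x, hx⟩ hsub
        rcases Finset.mem_inter.1 hx with ⟨hx1, hx2⟩
        rcases Finset.mem_sdiff.1 hx1 with ⟨hxA, hxB⟩
        exact hxB (hsub (Finset.mem_inter.2 ⟨hxA, hx2⟩))
      · intro hsub
        rcases Finset.not_subset.1 hsub with ⟨x, hx, hxB⟩
        rcases Finset.mem_inter.1 hx with ⟨hxA, hxR⟩
        exact ⟨x, Finset.mem_inter.2 ⟨Finset.mem_sdiff.2 ⟨hxA, hxB⟩, hxR⟩⟩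
    have heq : adDiff (fun T => if (T ∩ R).Nonempty then (1:ℝ) else 0) A S
        = (∑ B ∈ A.powerset, (-1:ℝ)^B.card)
          - ∑ B ∈ A.powerset.filter (fun B => A ∩ R ⊆ B), (-1:ℝ)^B.card := by
      rw [adDiff, Finset.sum_filter, ← Finset.sum_sub_distrib]
      refine Finset.sum_congr rfl fun B _ => ?_
      by_cases hq : A ∩ R ⊆ B
      · have h2 : ¬ ((S ∪ A \ B) ∩ R).Nonempty := fun hn => (key B).1 hn hq
        have h3 : (S ∪ A \ B) ∩ R = ∅ := Finset.not_nonempty_iff_eq_empty.1 h2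
        simp [hq, h3]
      · simp [hq, (key B).2 hq]
    rw [heq, SB1, SB2 Finset.inter_subset_left]
    rw [if_neg (Finset.nonempty_iff_ne_empty.1 hA)]
    split_ifs with h
    · have : (-1:ℝ)^(A.card+1) * (0 - (-1)^A.card) = ((-1:ℝ)^(A.card+1))^2 := by
        rw [pow_succ]; ring
      rw [this]
      positivity
    · simp

def gC (hit : V → Finset V → Prop) (S : Finset V) : ℕ → Finset V
  | 0 => S
  | t + 1 => gC hit S t ∪ Finset.univ.filter (fun v => hit v (gC hit S t))

variable {hit : V → Finset V → Prop} {S : Finset V}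

lemma gC_mono {s t : ℕ} (h : s ≤ t) : gC hit S s ⊆ gC hit S t := by
  induction t with
  | zero => rw [Nat.le_zero.1 h]
  | succ t ih =>
    rcases Nat.lt_or_ge s (t+1) with h' | h'
    · exact (ih (Nat.lt_succ_iff.1 h')).trans Finset.subset_union_left
    · rw [Nat.le_antisymm h h']

lemma gC_fix {t : ℕ} (h : gC hit S (t+1) = gC hit S t) :
    ∀ m, gC hit S (t+m) = gC hit S t := by
  intro m
  induction m with
  | zero => rfl
  | succ m ih =>
    show gC hit S ((t+m)+1) = _
    rw [gC, ih, ← gC, h]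

lemma gC_stab (m : ℕ) : gC hit S (Fintype.card V + m) = gC hit S (Fintype.card V) := by
  have : ∃ t ≤ Fintype.card V, gC hit S (t+1) = gC hit S t := by
    by_contra hc
    push_neg at hc
    have grow : ∀ t ≤ Fintype.card V + 1, t ≤ (gC hit S t).card := by
      intro t
      induction t with
      | zero => intro _; exact Nat.zero_le _
      | succ t ih =>
        intro ht
        have hlt : gC hit S t ⊂ gC hit S (t+1) :=
          Finset.ssubset_iff_of_subset (by exact gC_mono (Nat.le_succ t)) |>.2 (by
            have hne := hc t (by omega)
            rcases Finset.exists_of_ssubset (lt_of_le_of_ne (gC_mono (Nat.le_succ t)) (Ne.symm hne)) with ⟨x, hx1, hx2⟩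
            exact ⟨x, hx1, hx2⟩)
        have := Finset.card_lt_card hlt
        have := ih (by omega)
        omega
    have h1 := grow (Fintype.card V + 1) (le_refl _)
    have h2 : (gC hit S (Fintype.card V + 1)).card ≤ Fintype.card V :=
      Finset.card_le_card (Finset.subset_univ _) |>.trans (by rw [Finset.card_univ])
    omega
  rcases this with ⟨t, ht, hfix⟩
  have e1 : gC hit S (Fintype.card V + m) = gC hit S t := by
    have : Fintype.card V + m = t + (Fintype.card V + m - t) := by omega
    rw [this, gC_fix hfix]
  have e2 : gC hit S (Fintype.card V) = gC hit S t := by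
    have : Fintype.card V = t + (Fintype.card V - t) := by omega
    rw [this, gC_fix hfix]
  rw [e1, e2]

lemma gC_traj_iff (c : ℕ → Finset V) (n : ℕ) :
    (∀ t ≤ n, gC hit S t = c t)
      ↔ (c 0 = S ∧ ∀ u, ∀ t, t < n → (u ∈ c (t+1) ↔ u ∈ c t ∨ hit u (c t))) := by
  constructor
  · intro h
    refine ⟨(h 0 (Nat.zero_le _)).symm, fun u t ht => ?_⟩
    have h1 := h t (le_of_lt ht)
    have h2 := h (t+1) ht
    rw [← h1, ← h2, gC]
    simp
  · rintro ⟨h0, hstep⟩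
    intro t
    induction t with
    | zero => intro _; exact h0.symm
    | succ t ih =>
      intro ht
      have h1 := ih (le_of_lt ht)
      rw [gC, h1]
      ext u
      rw [hstep u t ht]
      simp

lemma dCasc_reach (ρ : V → Finset V) (S : Finset V) (v : V) :
    v ∈ gC (fun u C => (ρ u ∩ C).Nonempty) S (Fintype.card V)
      ↔ ∃ u ∈ S, Relation.ReflTransGen (fun a b => a ∈ ρ b) u v := by
  constructor
  · suffices h : ∀ t, ∀ w, w ∈ gC (fun u C => (ρ u ∩ C).Nonempty) S t →
        ∃ u ∈ S, Relation.ReflTransGen (fun a b => a ∈ ρ b) u w from h _ v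
    intro t
    induction t with
    | zero => exact fun w hw => ⟨w, hw, Relation.ReflTransGen.refl⟩
    | succ t ih =>
      intro w hw
      rw [gC, Finset.mem_union] at hw
      rcases hw with hw | hw
      · exact ih w hw
      · simp only [Finset.mem_filter] at hw
        rcases hw.2 with ⟨x, hx⟩
        rcases Finset.mem_inter.1 hx with ⟨hx1, hx2⟩
        rcases ih x hx2 with ⟨u, hu, hchain⟩
        exact ⟨u, hu, hchain.tail hx1⟩
  · rintro ⟨u, hu, hchain⟩
    have : ∃ t, v ∈ gC (fun u C => (ρ u ∩ C).Nonempty) S t := by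
      induction hchain with
      | refl => exact ⟨0, hu⟩
      | tail _ hstep ih =>
        rcases ih with ⟨t, ht⟩
        rename_i b c _
        refine ⟨t+1, ?_⟩
        rw [gC, Finset.mem_union]
        refine Or.inr ?_
        simp only [Finset.mem_filter]
        exact ⟨Finset.mem_univ _, ⟨b, Finset.mem_inter.2 ⟨hstep, ht⟩⟩⟩
    rcases this with ⟨t, ht⟩
    rcases Nat.le_total t (Fintype.card V) with h | h
    · exact gC_mono h ht
    · have : t = Fintype.card V + (t - Fintype.card V) := by omega
      rw [this] at ht
      rw [← gC_stab (t - Fintype.card V)]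
      exact ht

variable (gt : GTInstance V)

def μw (u : V) (A : Finset V) : ℝ :=
  if A = ∅ then 1 - gt.f u univ else (-1:ℝ)^(A.card+1) * adDiff (gt.f u) A Aᶜ

lemma μw_nonneg (hloc : ∀ v, IsADk (gt.f v) (Fintype.card V)) (u : V) (A : Finset V) :
    0 ≤ μw gt u A := by
  rw [μw]
  split_ifs with h
  · linarith [gt.f_le_one u univ]
  · exact hloc u A Aᶜ (Finset.nonempty_iff_ne_empty.2 h)
      ((Finset.card_le_univ A).trans (le_of_eq (Finset.card_univ)))

lemma μw_hit (u : V) (C : Finset V) :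
    ∑ A ∈ (univ : Finset (Finset V)).filter (fun A => (A ∩ C).Nonempty), μw gt u A
      = gt.f u C := by
  rw [← coverage_identity (gt.f u) (gt.f_empty u) C]
  refine Finset.sum_congr rfl fun A hA => ?_
  simp only [Finset.mem_filter] at hA
  have hne : A ≠ ∅ := by
    rintro rfl
    simp [Finset.not_nonempty_empty] at hA
  rw [μw, if_neg hne]

lemma μw_total (u : V) : ∑ A : Finset V, μw gt u A = 1 := by
  have hsplit := Finset.sum_filter_add_sum_filter_not (univ : Finset (Finset V))
    (fun A => (A ∩ (univ : Finset V)).Nonempty) (μw gt u)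
  have h1 : ∑ A ∈ (univ : Finset (Finset V)).filter
      (fun A => (A ∩ (univ : Finset V)).Nonempty), μw gt u A = gt.f u univ := μw_hit gt u univ
  have h2 : (univ : Finset (Finset V)).filter
      (fun A => ¬ (A ∩ (univ : Finset V)).Nonempty) = {∅} := by
    ext A
    simp only [Finset.mem_filter, Finset.mem_univ, true_and, Finset.mem_singleton,
      Finset.inter_univ, Finset.not_nonempty_iff_eq_empty]
  rw [h1, h2] at hsplit
  rw [← hsplit, Finset.sum_singleton, μw, if_pos rfl]
  ring

lemma μw_diff (u : V) {C' C : Finset V} (hCC : C' ⊆ C) :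
    ∑ A ∈ (univ : Finset (Finset V)).filter
        (fun A => (A ∩ C).Nonempty ∧ A ∩ C' = ∅), μw gt u A
      = gt.f u C - gt.f u C' := by
  have hsplit := Finset.sum_filter_add_sum_filter_not
    ((univ : Finset (Finset V)).filter (fun A => (A ∩ C).Nonempty))
    (fun A => (A ∩ C').Nonempty) (μw gt u)
  rw [Finset.filter_filter, Finset.filter_filter] at hsplit
  have h1 : (univ : Finset (Finset V)).filter
      (fun A => (A ∩ C).Nonempty ∧ (A ∩ C').Nonempty)
      = (univ : Finset (Finset V)).filter (fun A => (A ∩ C').Nonempty) := by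
    ext A
    simp only [Finset.mem_filter, Finset.mem_univ, true_and, and_iff_right_iff_imp]
    exact fun h => h.mono (Finset.inter_subset_inter (le_refl _) hCC)
  have h2 : (univ : Finset (Finset V)).filter
      (fun A => (A ∩ C).Nonempty ∧ ¬ (A ∩ C').Nonempty)
      = (univ : Finset (Finset V)).filter (fun A => (A ∩ C).Nonempty ∧ A ∩ C' = ∅) := by
    ext A
    simp [Finset.not_nonempty_iff_eq_empty]
  rw [h1, h2, μw_hit gt u C', μw_hit gt u C] at hsplit
  linarith

lemma μw_nothit (u : V) (C : Finset V) :
    ∑ A ∈ (univ : Finset (Finset V)).filter (fun A => A ∩ C = ∅), μw gt u A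
      = 1 - gt.f u C := by
  have hsplit := Finset.sum_filter_add_sum_filter_not (univ : Finset (Finset V))
    (fun A => (A ∩ C).Nonempty) (μw gt u)
  have h2 : (univ : Finset (Finset V)).filter (fun A => ¬ (A ∩ C).Nonempty)
      = (univ : Finset (Finset V)).filter (fun A => A ∩ C = ∅) := by
    ext A
    simp [Finset.not_nonempty_iff_eq_empty]
  rw [h2, μw_hit gt u C, μw_total gt u] at hsplit
  linarith

/-- extension of a `Fin (n+1)`-indexed vector of sets to `ℕ`. -/
def extv {n : ℕ} (c : Fin (n+1) → Finset V) (t : ℕ) : Finset V :=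
  c ⟨min t n, by omega⟩

lemma extv_le {n : ℕ} (c : Fin (n+1) → Finset V) {t : ℕ} (h : t ≤ n) :
    extv c t = c ⟨t, by omega⟩ := by
  simp [extv, Nat.min_eq_left h]

lemma extv_mono {n : ℕ} (c : Fin (n+1) → Finset V)
    (hmono : ∀ t < n, extv c t ⊆ extv c (t+1)) {s t : ℕ} (h : s ≤ t) :
    extv c s ⊆ extv c t := by
  induction t with
  | zero => rw [Nat.le_zero.1 h]
  | succ t ih =>
    rcases Nat.lt_or_ge s (t+1) with h' | h'
    · have hh := ih (Nat.lt_succ_iff.1 h')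
      rcases Nat.lt_or_ge t n with h2 | h2
      · exact hh.trans (hmono t h2)
      · have hm : min (t+1) n = min t n := by omega
        have : extv c (t+1) = extv c t := by
          unfold extv
          congr 1
          exact Fin.ext (by simpa using hm)
        rw [this]; exact hh
    · rw [Nat.le_antisymm h h']

/-- The θ-interval of node `u` compatible with trajectory `c`. -/
def JJ {n : ℕ} (c : Fin (n+1) → Finset V) (u : V) : Set ℝ :=
  {x | ∀ t, t < n → (u ∈ extv c (t+1) ↔ u ∈ extv c t ∨ x ≤ gt.f u (extv c t))}

/-- The triggering sets of node `u` compatible with trajectory `c`. -/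
def KK {n : ℕ} (c : Fin (n+1) → Finset V) (u : V) : Finset (Finset V) :=
  (univ : Finset (Finset V)).filter
    (fun A => ∀ t, t < n → (u ∈ extv c (t+1) ↔ u ∈ extv c t ∨ (A ∩ extv c t).Nonempty))

def mw {n : ℕ} (c : Fin (n+1) → Finset V) (u : V) : ℝ := ∑ A ∈ KK c u, μw gt u A

lemma keyJ {n : ℕ} (hn : 1 ≤ n) (c : Fin (n+1) → Finset V)
    (hmono : ∀ t < n, extv c t ⊆ extv c (t+1)) (u : V) :
    (volume.restrict (Set.Icc (0:ℝ) 1)) (JJ gt c u) = ENNReal.ofReal (mw gt c u) := by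
  by_cases h0 : u ∈ extv c 0
  · -- u is a seed: no constraint
    have hin : ∀ t, u ∈ extv c t := fun t => extv_mono c hmono (Nat.zero_le t) h0
    have hJ : JJ gt c u = Set.univ := by
      apply Set.eq_univ_iff_forall.2
      intro x t ht
      exact iff_of_true (hin (t+1)) (Or.inl (hin t))
    have hK : KK c u = (univ : Finset (Finset V)) := by
      apply Finset.filter_true_of_mem
      intro A _ t ht
      exact iff_of_true (hin (t+1)) (Or.inl (hin t))
    rw [hJ, mw, hK, μw_total, Measure.restrict_apply_univ, Real.volume_Icc]
    norm_num
  · by_cases hfin : u ∈ extv c n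
    · -- u activates at time j ≥ 1
      have hex : ∃ t, u ∈ extv c t := ⟨n, hfin⟩
      set j := Nat.find hex with hjdef
      have hj : u ∈ extv c j := Nat.find_spec hex
      have hmin : ∀ t, t < j → u ∉ extv c t := fun t ht => Nat.find_min hex ht
      have hj1 : 1 ≤ j := by
        rcases Nat.eq_zero_or_pos j with h | h
        · exact absurd (h ▸ hj) h0
        · exact h
      have hjn : j ≤ n := Nat.find_min' hex hfin
      have pat : ∀ t, (u ∈ extv c t ↔ j ≤ t) := by
        intro t
        constructor
        · intro h
          by_contra hc
          exact hmin t (by omega) h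
        · intro h
          exact extv_mono c hmono h hj
      rcases eq_or_lt_of_le hj1 with hj2 | hj2
      · -- j = 1
        have hJ : JJ gt c u = Set.Iic (gt.f u (extv c 0)) := by
          ext x
          simp only [JJ, Set.mem_setOf_eq, Set.mem_Iic]
          constructor
          · intro h
            have h1 := h 0 (by omega)
            rw [iff_true_left ((pat 1).2 (le_of_eq hj2.symm))] at h1
            rcases h1 with h1 | h1
            · exact absurd h1 h0
            · exact h1
          · intro hx t ht
            rcases Nat.eq_zero_or_pos t with rfl | hpos
            · exact iff_of_true ((pat 1).2 (le_of_eq hj2.symm)) (Or.inr hx)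
            · exact iff_of_true ((pat (t+1)).2 (by omega)) (Or.inl ((pat t).2 (by omega)))
        have hK : KK c u
            = (univ : Finset (Finset V)).filter (fun A => (A ∩ extv c 0).Nonempty) := by
          ext A
          simp only [KK, Finset.mem_filter, Finset.mem_univ, true_and]
          constructor
          · intro h
            have h1 := h 0 (by omega)
            rw [iff_true_left ((pat 1).2 (le_of_eq hj2.symm))] at h1
            rcases h1 with h1 | h1
            · exact absurd h1 h0
            · exact h1
          · intro hx t ht
            rcases Nat.eq_zero_or_pos t with rfl | hpos
            · exact iff_of_true ((pat 1).2 (le_of_eq hj2.symm)) (Or.inr hx)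
            · exact iff_of_true ((pat (t+1)).2 (by omega)) (Or.inl ((pat t).2 (by omega)))
        have hle1 : gt.f u (extv c 0) ≤ 1 := gt.f_le_one u _
        have hge0 : 0 ≤ gt.f u (extv c 0) := gt.f_nonneg u _
        have hset : Set.Iic (gt.f u (extv c 0)) ∩ Set.Icc (0:ℝ) 1
            = Set.Icc 0 (gt.f u (extv c 0)) := by
          ext x
          simp only [Set.mem_inter_iff, Set.mem_Iic, Set.mem_Icc]
          constructor
          · rintro ⟨h1, h2, _⟩; exact ⟨h2, h1⟩
          · rintro ⟨h1, h2⟩; exact ⟨h2, h1, h2.trans hle1⟩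
        rw [hJ, Measure.restrict_apply measurableSet_Iic, hset, Real.volume_Icc,
          mw, hK, μw_hit]
        norm_num
      · -- j ≥ 2
        have hj2' : 2 ≤ j := hj2
        set a := gt.f u (extv c (j-2)) with hadef
        set b := gt.f u (extv c (j-1)) with hbdef
        have hsub : extv c (j-2) ⊆ extv c (j-1) := extv_mono c hmono (by omega)
        have hab : a ≤ b := gt.f_mono u hsub
        have hj1n : j - 1 < n := by omega
        have hj2n : j - 2 < n := by omega
        have pat1 : u ∈ extv c ((j-1)+1) := (pat _).2 (by omega)
        have pat2 : u ∉ extv c (j-1) := fun h => by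
          have := (pat _).1 h; omega
        have pat3 : u ∉ extv c ((j-2)+1) := by
          have : (j-2)+1 = j-1 := by omega
          rw [this]; exact pat2
        have pat4 : u ∉ extv c (j-2) := fun h => by
          have := (pat _).1 h; omega
        have hJ : JJ gt c u = Set.Ioc a b := by
          ext x
          simp only [JJ, Set.mem_setOf_eq, Set.mem_Ioc]
          constructor
          · intro h
            constructor
            · have h2 := h (j-2) hj2n
              rw [iff_false_left pat3] at h2
              push_neg at h2
              exact h2.2
            · have h1 := h (j-1) hj1n
              rw [iff_true_left pat1] at h1
              rcases h1 with h1 | h1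
              · exact absurd h1 pat2
              · exact h1
          · rintro ⟨hxa, hxb⟩ t ht
            rcases lt_trichotomy t (j-1) with h' | h' | h'
            · -- t ≤ j - 2
              have htj : t ≤ j - 2 := by omega
              have hnot1 : u ∉ extv c (t+1) := fun h => by
                have := (pat _).1 h; omega
              have hnot2 : u ∉ extv c t := fun h => by
                have := (pat _).1 h; omega
              have hfle : gt.f u (extv c t) ≤ a :=
                gt.f_mono u (extv_mono c hmono htj)
              refine iff_of_false hnot1 ?_
              rintro (h | h)
              · exact hnot2 h
              · exact absurd hxa (not_lt.2 (h.trans hfle))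
            · subst h'
              exact iff_of_true pat1 (Or.inr hxb)
            · exact iff_of_true ((pat _).2 (by omega)) (Or.inl ((pat _).2 (by omega)))
        have hK : KK c u = (univ : Finset (Finset V)).filter
            (fun A => (A ∩ extv c (j-1)).Nonempty ∧ A ∩ extv c (j-2) = ∅) := by
          ext A
          simp only [KK, Finset.mem_filter, Finset.mem_univ, true_and]
          constructor
          · intro h
            constructor
            · have h1 := h (j-1) hj1n
              rw [iff_true_left pat1] at h1
              rcases h1 with h1 | h1
              · exact absurd h1 pat2
              · exact h1
            · have h2 := h (j-2) hj2n
              rw [iff_false_left pat3] at h2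
              push_neg at h2
              exact h2.2
          · rintro ⟨hA1, hA2⟩ t ht
            rcases lt_trichotomy t (j-1) with h' | h' | h'
            · have htj : t ≤ j - 2 := by omega
              have hnot1 : u ∉ extv c (t+1) := fun h => by
                have := (pat _).1 h; omega
              have hnot2 : u ∉ extv c t := fun h => by
                have := (pat _).1 h; omega
              refine iff_of_false hnot1 ?_
              rintro (h | h)
              · exact hnot2 h
              · rcases h with ⟨x, hx⟩
                have : x ∈ A ∩ extv c (j-2) := by
                  rcases Finset.mem_inter.1 hx with ⟨hx1, hx2⟩
                  exact Finset.mem_inter.2 ⟨hx1, extv_mono c hmono htj hx2⟩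
                simp [hA2] at this
            · subst h'
              exact iff_of_true pat1 (Or.inr hA1)
            · exact iff_of_true ((pat _).2 (by omega)) (Or.inl ((pat _).2 (by omega)))
        have hge0 : (0:ℝ) ≤ a := gt.f_nonneg u _
        have hle1 : b ≤ 1 := gt.f_le_one u _
        have hset : Set.Ioc a b ∩ Set.Icc (0:ℝ) 1 = Set.Ioc a b := by
          apply Set.inter_eq_left.2
          intro x hx
          rcases hx with ⟨h1, h2⟩
          exact ⟨le_of_lt (lt_of_le_of_lt hge0 h1), h2.trans hle1⟩
        rw [hJ, Measure.restrict_apply measurableSet_Ioc, hset, Real.volume_Ioc,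
          mw, hK, μw_diff gt u hsub]
    · -- u never activates
      have hnever : ∀ t, t ≤ n → u ∉ extv c t := by
        intro t ht h
        exact hfin (extv_mono c hmono ht h)
      have hfle : ∀ t, t < n → gt.f u (extv c t) ≤ gt.f u (extv c (n-1)) := by
        intro t ht
        exact gt.f_mono u (extv_mono c hmono (by omega))
      have hJ : JJ gt c u = Set.Ioi (gt.f u (extv c (n-1))) := by
        ext x
        simp only [JJ, Set.mem_setOf_eq, Set.mem_Ioi]
        constructor
        · intro h
          have h1 := h (n-1) (by omega)
          rw [iff_false_left (hnever _ (by omega))] at h1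
          push_neg at h1
          exact h1.2
        · intro hx t ht
          refine iff_of_false (hnever _ (by omega)) ?_
          rintro (h | h)
          · exact hnever _ (by omega) h
          · exact absurd hx (not_lt.2 (h.trans (hfle t ht)))
      have hK : KK c u = (univ : Finset (Finset V)).filter
          (fun A => A ∩ extv c (n-1) = ∅) := by
        ext A
        simp only [KK, Finset.mem_filter, Finset.mem_univ, true_and]
        constructor
        · intro h
          have h1 := h (n-1) (by omega)
          rw [iff_false_left (hnever _ (by omega))] at h1
          push_neg at h1
          exact h1.2
        · intro hA t ht
          refine iff_of_false (hnever _ (by omega)) ?_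
          rintro (h | h)
          · exact hnever _ (by omega) h
          · rcases h with ⟨x, hx⟩
            have : x ∈ A ∩ extv c (n-1) := by
              rcases Finset.mem_inter.1 hx with ⟨hx1, hx2⟩
              exact Finset.mem_inter.2 ⟨hx1, extv_mono c hmono (by omega) hx2⟩
            simp [hA] at this
      have hge0 : (0:ℝ) ≤ gt.f u (extv c (n-1)) := gt.f_nonneg u _
      have hle1 : gt.f u (extv c (n-1)) ≤ 1 := gt.f_le_one u _
      have hset : Set.Ioi (gt.f u (extv c (n-1))) ∩ Set.Icc (0:ℝ) 1
          = Set.Ioc (gt.f u (extv c (n-1))) 1 := by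
        ext x
        simp only [Set.mem_inter_iff, Set.mem_Ioi, Set.mem_Icc, Set.mem_Ioc]
        constructor
        · rintro ⟨h1, _, h3⟩; exact ⟨h1, h3⟩
        · rintro ⟨h1, h2⟩; exact ⟨h1, le_of_lt (lt_of_le_of_lt hge0 h1), h2⟩
      rw [hJ, Measure.restrict_apply measurableSet_Ioi, hset, Real.volume_Ioc,
        mw, hK, μw_nothit]

lemma mw_nonneg (hloc : ∀ v, IsADk (gt.f v) (Fintype.card V))
    {n : ℕ} (c : Fin (n+1) → Finset V) (u : V) : 0 ≤ mw gt c u :=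
  Finset.sum_nonneg fun A _ => μw_nonneg gt hloc u A

-- bad trajectory: some node is dropped
lemma bad_traj {n : ℕ} (c : Fin (n+1) → Finset V)
    (hbad : ¬ ∀ t < n, extv c t ⊆ extv c (t+1)) :
    ∃ u : V, JJ gt c u = ∅ ∧ mw gt c u = 0 := by
  push_neg at hbad
  rcases hbad with ⟨t, ht, hsub⟩
  rcases Finset.not_subset.1 hsub with ⟨u, hu1, hu2⟩
  refine ⟨u, ?_, ?_⟩
  · ext x
    simp only [JJ, Set.mem_setOf_eq, Set.mem_empty_iff_false, iff_false]
    intro h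
    exact hu2 ((h t ht).2 (Or.inl hu1))
  · rw [mw]
    have : KK c u = ∅ := by
      rw [Finset.eq_empty_iff_forall_notMem]
      intro A hA
      simp only [KK, Finset.mem_filter] at hA
      exact hu2 ((hA.2 t ht).2 (Or.inl hu1))
    rw [this, Finset.sum_empty]

lemma prodJK (hloc : ∀ v, IsADk (gt.f v) (Fintype.card V))
    (c : Fin (Fintype.card V + 1) → Finset V) :
    ∏ u : V, (volume.restrict (Set.Icc (0:ℝ) 1)) (JJ gt c u)
      = ENNReal.ofReal (∏ u : V, mw gt c u) := by
  rcases isEmpty_or_nonempty V with hV | hV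
  · simp
  · have hn : 1 ≤ Fintype.card V := Fintype.card_pos
    by_cases hmono : ∀ t < Fintype.card V, extv c t ⊆ extv c (t+1)
    · rw [ENNReal.ofReal_prod_of_nonneg (fun u _ => mw_nonneg gt hloc c u)]
      exact Finset.prod_congr rfl fun u _ => keyJ gt hn c hmono u
    · rcases bad_traj gt c hmono with ⟨u, hJ, hmw⟩
      rw [Finset.prod_eq_zero (Finset.mem_univ u) (by rw [hJ]; simp),
        Finset.prod_eq_zero (Finset.mem_univ u) hmw]
      simp

lemma JJ_meas {n : ℕ} (c : Fin (n+1) → Finset V) (u : V) :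
    MeasurableSet (JJ gt c u) := by
  have : JJ gt c u = ⋂ (t : ℕ), ⋂ (_ : t < n),
      {x : ℝ | u ∈ extv c (t+1) ↔ u ∈ extv c t ∨ x ≤ gt.f u (extv c t)} := by
    ext x
    simp only [JJ, Set.mem_setOf_eq, Set.mem_iInter]
  rw [this]
  refine MeasurableSet.iInter fun t => MeasurableSet.iInter fun ht => ?_
  by_cases h1 : u ∈ extv c (t+1) <;> by_cases h2 : u ∈ extv c t
  · have : {x : ℝ | u ∈ extv c (t+1) ↔ u ∈ extv c t ∨ x ≤ gt.f u (extv c t)} = Set.univ := by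
      ext x; simp [h1, h2]
    rw [this]; exact MeasurableSet.univ
  · have : {x : ℝ | u ∈ extv c (t+1) ↔ u ∈ extv c t ∨ x ≤ gt.f u (extv c t)}
        = Set.Iic (gt.f u (extv c t)) := by
      ext x; simp [h1, h2]
    rw [this]; exact measurableSet_Iic
  · have : {x : ℝ | u ∈ extv c (t+1) ↔ u ∈ extv c t ∨ x ≤ gt.f u (extv c t)} = ∅ := by
      ext x; simp [h1, h2]
    rw [this]; exact MeasurableSet.empty
  · have : {x : ℝ | u ∈ extv c (t+1) ↔ u ∈ extv c t ∨ x ≤ gt.f u (extv c t)}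
        = Set.Ioi (gt.f u (extv c t)) := by
      ext x; simp [h1, h2, not_le]
    rw [this]; exact measurableSet_Ioi

def trajΘ (θ : V → ℝ) (S : Finset V) : Fin (Fintype.card V + 1) → Finset V :=
  fun i => cascade gt θ S i.1

lemma cascade_eq_gC (θ : V → ℝ) (S : Finset V) (t : ℕ) :
    cascade gt θ S t = gC (fun v C => θ v ≤ gt.f v C) S t := by
  induction t with
  | zero => rfl
  | succ t ih => rw [cascade, gC, ih]

lemma trajΘ_eq_iff (θ : V → ℝ) (S : Finset V) (c : Fin (Fintype.card V + 1) → Finset V) :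
    trajΘ gt θ S = c ↔ (extv c 0 = S ∧ ∀ u, θ u ∈ JJ gt c u) := by
  have h1 : trajΘ gt θ S = c
      ↔ ∀ t ≤ Fintype.card V, gC (fun v C => θ v ≤ gt.f v C) S t = extv c t := by
    rw [funext_iff]
    constructor
    · intro h t ht
      rw [← cascade_eq_gC, extv_le c ht]
      exact h ⟨t, by omega⟩
    · intro h i
      have := h i.1 (by omega)
      rw [← cascade_eq_gC] at this
      rw [extv_le c (show i.1 ≤ Fintype.card V by omega)] at this
      simpa [trajΘ] using this
  rw [h1, gC_traj_iff (extv c) (Fintype.card V)]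
  constructor
  · rintro ⟨h0, h⟩
    exact ⟨h0, fun u t ht => h u t ht⟩
  · rintro ⟨h0, h⟩
    exact ⟨h0, fun u t ht => h u t ht⟩

lemma fiber_meas (S : Finset V) (c : Fin (Fintype.card V + 1) → Finset V) :
    {θ : V → ℝ | trajΘ gt θ S = c}
      = if extv c 0 = S then Set.pi Set.univ (fun u => JJ gt c u) else ∅ := by
  split_ifs with h
  · ext θ
    simp only [Set.mem_setOf_eq, trajΘ_eq_iff, Set.mem_pi, Set.mem_univ, true_implies, h,
      true_and]
  · ext θ
    simp only [Set.mem_setOf_eq, trajΘ_eq_iff, Set.mem_empty_iff_false, iff_false, not_and]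
    intro h0
    exact absurd h0 h

lemma fiber_measurable (S : Finset V) (c : Fin (Fintype.card V + 1) → Finset V) :
    MeasurableSet {θ : V → ℝ | trajΘ gt θ S = c} := by
  rw [fiber_meas]
  split_ifs with h
  · exact MeasurableSet.univ_pi (fun u => JJ_meas gt c u)
  · exact MeasurableSet.empty

lemma fiber_measure (hloc : ∀ v, IsADk (gt.f v) (Fintype.card V))
    (S : Finset V) (c : Fin (Fintype.card V + 1) → Finset V) :
    cubeMeasure V {θ : V → ℝ | trajΘ gt θ S = c}
      = if extv c 0 = S then ENNReal.ofReal (∏ u : V, mw gt c u) else 0 := by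
  rw [fiber_meas]
  split_ifs with h
  · rw [cubeMeasure, Measure.pi_pi, prodJK gt hloc]
  · simp

lemma activ_eq (hloc : ∀ v, IsADk (gt.f v) (Fintype.card V)) (v : V) (S : Finset V) :
    activationProb gt v S
      = ∑ c : Fin (Fintype.card V + 1) → Finset V,
          (if v ∈ c (Fin.last _) ∧ extv c 0 = S then ∏ u : V, mw gt c u else 0) := by
  have hE : {θ : V → ℝ | v ∈ finalSet gt θ S}
      = ⋃ c : Fin (Fintype.card V + 1) → Finset V,
          {θ : V → ℝ | trajΘ gt θ S = c ∧ v ∈ c (Fin.last _)} := by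
    ext θ
    simp only [Set.mem_setOf_eq, Set.mem_iUnion]
    constructor
    · intro h
      refine ⟨trajΘ gt θ S, rfl, ?_⟩
      simpa [trajΘ, Fin.val_last, finalSet] using h
    · rintro ⟨c, hc, hv⟩
      have : finalSet gt θ S = c (Fin.last _) := by
        rw [← hc]; simp [trajΘ, Fin.val_last, finalSet]
      rw [this]
      exact hv
  have hsets : ∀ c : Fin (Fintype.card V + 1) → Finset V,
      {θ : V → ℝ | trajΘ gt θ S = c ∧ v ∈ c (Fin.last _)}
        = if v ∈ c (Fin.last _) then {θ : V → ℝ | trajΘ gt θ S = c} else ∅ := by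
    intro c
    split_ifs with h
    · ext θ; simp [h]
    · ext θ; simp [h]
  have hmeas : ∀ c : Fin (Fintype.card V + 1) → Finset V,
      MeasurableSet {θ : V → ℝ | trajΘ gt θ S = c ∧ v ∈ c (Fin.last _)} := by
    intro c
    rw [hsets c]
    split_ifs
    · exact fiber_measurable gt S c
    · exact MeasurableSet.empty
  have hdisj : Pairwise (Function.onFun Disjoint
      (fun c : Fin (Fintype.card V + 1) → Finset V =>
        {θ : V → ℝ | trajΘ gt θ S = c ∧ v ∈ c (Fin.last _)})) := by
    intro c1 c2 hne
    refine Set.disjoint_left.2 fun θ h1 h2 => hne ?_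
    exact h1.1.symm.trans h2.1
  rw [activationProb, hE, measure_iUnion hdisj hmeas, tsum_fintype]
  have hterm : ∀ c : Fin (Fintype.card V + 1) → Finset V,
      cubeMeasure V {θ : V → ℝ | trajΘ gt θ S = c ∧ v ∈ c (Fin.last _)}
        = if v ∈ c (Fin.last _) ∧ extv c 0 = S
            then ENNReal.ofReal (∏ u : V, mw gt c u) else 0 := by
    intro c
    rw [hsets c]
    split_ifs with h1 h2 h3
    · rw [fiber_measure gt hloc, if_pos h2.2]
    · rw [fiber_measure gt hloc, if_neg (fun hc => h2 ⟨h1, hc⟩)]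
    · exact absurd h3.1 h1
    · simp
  rw [Finset.sum_congr rfl (fun c _ => hterm c)]
  rw [ENNReal.toReal_sum]
  · refine Finset.sum_congr rfl fun c _ => ?_
    split_ifs with h
    · exact ENNReal.toReal_ofReal (Finset.prod_nonneg fun u _ => mw_nonneg gt hloc c u)
    · simp
  · intro c _
    split_ifs
    · exact ENNReal.ofReal_ne_top
    · simp

def trajR (ρ : V → Finset V) (S : Finset V) : Fin (Fintype.card V + 1) → Finset V :=
  fun i => gC (fun u C => (ρ u ∩ C).Nonempty) S i.1

lemma trajR_eq_iff (ρ : V → Finset V) (S : Finset V)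
    (c : Fin (Fintype.card V + 1) → Finset V) :
    trajR ρ S = c ↔ (extv c 0 = S ∧ ∀ u, ρ u ∈ KK c u) := by
  have h1 : trajR ρ S = c
      ↔ ∀ t ≤ Fintype.card V, gC (fun u C => (ρ u ∩ C).Nonempty) S t = extv c t := by
    rw [funext_iff]
    constructor
    · intro h t ht
      rw [extv_le c ht]
      exact h ⟨t, by omega⟩
    · intro h i
      have := h i.1 (by omega)
      rw [extv_le c (show i.1 ≤ Fintype.card V by omega)] at this
      simpa [trajR] using this
  rw [h1, gC_traj_iff (extv c) (Fintype.card V)]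
  constructor
  · rintro ⟨h0, h⟩
    refine ⟨h0, fun u => ?_⟩
    simp only [KK, Finset.mem_filter, Finset.mem_univ, true_and]
    exact fun t ht => h u t ht
  · rintro ⟨h0, h⟩
    refine ⟨h0, fun u t ht => ?_⟩
    have := h u
    simp only [KK, Finset.mem_filter, Finset.mem_univ, true_and] at this
    exact this t ht

lemma psi_eq (v : V) (S : Finset V) :
    ∑ ρ : V → Finset V, (∏ u : V, μw gt u (ρ u))
        * (if v ∈ gC (fun u C => (ρ u ∩ C).Nonempty) S (Fintype.card V) then (1:ℝ) else 0)
      = ∑ c : Fin (Fintype.card V + 1) → Finset V,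
          (if v ∈ c (Fin.last _) ∧ extv c 0 = S then ∏ u : V, mw gt c u else 0) := by
  have hfib := Finset.sum_fiberwise_eq_sum_filter
    (univ : Finset (V → Finset V)) (univ : Finset (Fin (Fintype.card V + 1) → Finset V))
    (fun ρ => trajR ρ S)
    (fun ρ => (∏ u : V, μw gt u (ρ u))
      * (if v ∈ gC (fun u C => (ρ u ∩ C).Nonempty) S (Fintype.card V) then (1:ℝ) else 0))
  have hall : (univ : Finset (V → Finset V)).filter
      (fun ρ => trajR ρ S ∈ (univ : Finset (Fin (Fintype.card V + 1) → Finset V)))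
      = univ := by
    apply Finset.filter_true_of_mem
    intro ρ _
    exact Finset.mem_univ _
  rw [hall] at hfib
  rw [← hfib]
  refine Finset.sum_congr rfl fun c _ => ?_
  have hmem : ∀ ρ ∈ (univ : Finset (V → Finset V)).filter (fun ρ => trajR ρ S = c),
      (∏ u : V, μw gt u (ρ u))
          * (if v ∈ gC (fun u C => (ρ u ∩ C).Nonempty) S (Fintype.card V) then (1:ℝ) else 0)
        = (∏ u : V, μw gt u (ρ u)) * (if v ∈ c (Fin.last _) then (1:ℝ) else 0) := by
    intro ρ hρ
    simp only [Finset.mem_filter] at hρ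
    have : gC (fun u C => (ρ u ∩ C).Nonempty) S (Fintype.card V) = c (Fin.last _) := by
      rw [← hρ.2]
      simp [trajR, Fin.val_last]
    rw [this]
  rw [Finset.sum_congr rfl hmem, ← Finset.sum_mul]
  have hfilter : (univ : Finset (V → Finset V)).filter (fun ρ => trajR ρ S = c)
      = if extv c 0 = S then Fintype.piFinset (fun u => KK c u) else ∅ := by
    ext ρ
    simp only [Finset.mem_filter, Finset.mem_univ, true_and, trajR_eq_iff]
    split_ifs with h
    · simp only [Fintype.mem_piFinset]
      exact ⟨fun hh => hh.2, fun hh => ⟨h, hh⟩⟩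
    · simp only [Finset.notMem_empty, iff_false, not_and]
      intro h0
      exact absurd h0 h
  rw [hfilter]
  by_cases h0 : extv c 0 = S
  · rw [if_pos h0, ← Finset.prod_univ_sum]
    by_cases hv : v ∈ c (Fin.last _)
    · rw [if_pos hv, if_pos ⟨hv, h0⟩, mul_one]
      simp only [mw]
    · rw [if_neg hv, mul_zero, eq_comm, if_neg]
      rintro ⟨hh, -⟩
      exact hv hh
  · rw [if_neg h0, Finset.sum_empty, zero_mul, eq_comm, if_neg]
    rintro ⟨-, hh⟩
    exact h0 hh

def Bv (ρ : V → Finset V) (v : V) : Finset V :=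
  (univ : Finset V).filter (fun u => Relation.ReflTransGen (fun a b => a ∈ ρ b) u v)

lemma activ_formula (hloc : ∀ v, IsADk (gt.f v) (Fintype.card V)) (v : V) (S : Finset V) :
    activationProb gt v S
      = ∑ ρ : V → Finset V, (∏ u : V, μw gt u (ρ u))
          * (if (S ∩ Bv ρ v).Nonempty then (1:ℝ) else 0) := by
  rw [activ_eq gt hloc, ← psi_eq]
  refine Finset.sum_congr rfl fun ρ _ => ?_
  congr 1
  have : v ∈ gC (fun u C => (ρ u ∩ C).Nonempty) S (Fintype.card V)
      ↔ (S ∩ Bv ρ v).Nonempty := by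
    rw [dCasc_reach]
    constructor
    · rintro ⟨u, hu, hchain⟩
      exact ⟨u, Finset.mem_inter.2 ⟨hu, Finset.mem_filter.2 ⟨Finset.mem_univ _, hchain⟩⟩⟩
    · rintro ⟨u, hu⟩
      rcases Finset.mem_inter.1 hu with ⟨h1, h2⟩
      exact ⟨u, h1, (Finset.mem_filter.1 h2).2⟩
  split_ifs with h1 h2 h2
  · rfl
  · exact absurd (this.1 h1) h2
  · exact absurd (this.2 h2) h1
  · rfl

end ADWork

open ADWork

/-- In the general threshold model on an arbitrary finite directed graph, if every
threshold function is AD-∞ (i.e. AD-`|V|`), then the spread function `σ` is AD-∞. -/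
theorem locally_ADinfty_implies_globally_ADinfty
    {V : Type*} [Fintype V] [DecidableEq V] (gt : GTInstance V)
    (hloc : ∀ v, IsADk (gt.f v) (Fintype.card V)) :
    IsADk (spread gt) (Fintype.card V) := by
  intro A S hA _
  have hdiff : adDiff (spread gt) A S
      = ∑ v : V, ∑ ρ : V → Finset V, (∏ u : V, μw gt u (ρ u))
          * adDiff (fun T => if (T ∩ Bv ρ v).Nonempty then (1:ℝ) else 0) A S := by
    rw [adDiff]
    have h1 : ∀ B ∈ A.powerset,
        (-1:ℝ)^B.card * spread gt (S ∪ (A \ B))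
          = ∑ v : V, ∑ ρ : V → Finset V, (∏ u : V, μw gt u (ρ u))
              * ((-1:ℝ)^B.card
                * (if ((S ∪ (A \ B)) ∩ Bv ρ v).Nonempty then (1:ℝ) else 0)) := by
      intro B _
      rw [spread, Finset.mul_sum]
      refine Finset.sum_congr rfl fun v _ => ?_
      rw [activ_formula gt hloc, Finset.mul_sum]
      refine Finset.sum_congr rfl fun ρ _ => ?_
      ring
    rw [Finset.sum_congr rfl h1, Finset.sum_comm]
    refine Finset.sum_congr rfl fun v _ => ?_
    rw [Finset.sum_comm]
    refine Finset.sum_congr rfl fun ρ _ => ?_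
    rw [adDiff, Finset.mul_sum]
  rw [hdiff, Finset.mul_sum]
  refine Finset.sum_nonneg fun v _ => ?_
  rw [Finset.mul_sum]
  refine Finset.sum_nonneg fun ρ _ => ?_
  have h2 : (-1:ℝ)^(A.card+1) * ((∏ u : V, μw gt u (ρ u))
      * adDiff (fun T => if (T ∩ Bv ρ v).Nonempty then (1:ℝ) else 0) A S)
      = (∏ u : V, μw gt u (ρ u))
        * ((-1:ℝ)^(A.card+1)
          * adDiff (fun T => if (T ∩ Bv ρ v).Nonempty then (1:ℝ) else 0) A S) := by
    ring
  rw [h2]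
  exact mul_nonneg (Finset.prod_nonneg fun u _ => μw_nonneg gt hloc u (ρ u))
    (indicator_AD (Bv ρ v) A S hA)

end
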